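/- Let m ≠ -1, λ, b, c be real constants and define B(x) = b·x·(x²+1)^{-m/2} + c·(x²+1)^{-m/2}·F(x) - λ(x²+1)/(m+1), where F(x) = 1 - x·∫₀ˣ ((y²+1)^{m/2}-1)/y² dy. Then B satisfies the ODE B''(x) + m/(x²+1)² · (x(x²+1)B'(x) + 2B(x)) + 2λ = 0 for all x ∈ ℝ. -/

import Mathlib

open Real

noncomputable def hgF (m : ℝ) (x : ℝ) : ℝ :=
  1 - x * ∫ y in (0:ℝ)..x, ((y ^ 2 + 1) ^ (m / 2) - 1) / y ^ 2

/-- The function `B` from (2.9) for `m ≠ -1`. -/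
noncomputable def Bfun (m lam b c : ℝ) (x : ℝ) : ℝ :=
  b * x * (x ^ 2 + 1) ^ (-m / 2) + c * (x ^ 2 + 1) ^ (-m / 2) * hgF m x
    - lam * (x ^ 2 + 1) / (m + 1)

open Filter MeasureTheory intervalIntegral Topology

/-- Continuous extension of the integrand in `hgF`. -/
noncomputable def Gfun (m : ℝ) (y : ℝ) : ℝ :=
  if y = 0 then m / 2 else ((y ^ 2 + 1) ^ (m / 2) - 1) / y ^ 2

noncomputable def Ifun (m x : ℝ) : ℝ := ∫ y in (0:ℝ)..x, Gfun m y

lemma hasDerivAt_P (e x : ℝ) :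
    HasDerivAt (fun t : ℝ => (t ^ 2 + 1) ^ e) (e * (x ^ 2 + 1) ^ (e - 1) * (2 * x)) x := by
  have h1 : HasDerivAt (fun t : ℝ => t ^ 2 + 1) (2 * x) x := by
    simpa using (hasDerivAt_pow 2 x).add_const 1
  have h2 := (Real.hasDerivAt_rpow_const (p := e) (x := x ^ 2 + 1)
    (Or.inl (by positivity))).comp x h1
  simpa [mul_assoc, Function.comp_def] using h2

lemma tendsto_Gfun (m : ℝ) : Tendsto (Gfun m) (𝓝[≠] (0:ℝ)) (𝓝 (m / 2)) := by
  have hf : HasDerivAt (fun t : ℝ => (t + 1) ^ (m / 2)) (m / 2) 0 := by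
    have := (Real.hasDerivAt_rpow_const (p := m / 2) (x := (0:ℝ) + 1)
      (Or.inl (by norm_num))).comp (0:ℝ) ((hasDerivAt_id (0:ℝ)).add_const 1)
    simpa [Function.comp_def] using this
  have hslope := hasDerivAt_iff_tendsto_slope.mp hf
  have hsq : Tendsto (fun y : ℝ => y ^ 2) (𝓝[≠] (0:ℝ)) (𝓝[≠] (0:ℝ)) := by
    rw [tendsto_nhdsWithin_iff]
    constructor
    · have : Tendsto (fun y : ℝ => y ^ 2) (𝓝 0) (𝓝 0) := by
        simpa using (continuous_pow 2).tendsto (0:ℝ)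
      exact this.mono_left nhdsWithin_le_nhds
    · exact eventually_mem_nhdsWithin.mono fun y hy => pow_ne_zero 2 hy
  have := hslope.comp hsq
  refine this.congr' ?_
  filter_upwards [eventually_mem_nhdsWithin] with y hy
  have hy' : (y:ℝ) ≠ 0 := hy
  simp [Function.comp, slope_def_field, Gfun, if_neg hy', Real.one_rpow]

lemma continuous_Gfun (m : ℝ) : Continuous (Gfun m) := by
  rw [continuous_iff_continuousAt]
  intro x
  by_cases hx : x = 0
  · subst hx
    have h0 : Gfun m 0 = m / 2 := if_pos rfl
    rw [ContinuousAt, h0, ← nhdsNE_sup_pure, tendsto_sup]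
    exact ⟨tendsto_Gfun m, by
      rw [tendsto_pure_left]; intro s hs; rw [h0]; exact mem_of_mem_nhds hs⟩
  · have hc : ContinuousAt (fun y : ℝ => ((y ^ 2 + 1) ^ (m / 2) - 1) / y ^ 2) x := by
      apply ContinuousAt.div
      · apply ContinuousAt.sub _ continuousAt_const
        have hb : ContinuousAt (fun y : ℝ => y ^ 2 + 1) x := by fun_prop
        exact hb.rpow_const (Or.inl (by positivity))
      · fun_prop
      · positivity
    refine hc.congr ?_
    filter_upwards [isOpen_ne.mem_nhds hx] with y hy
    simp [Gfun, if_neg hy]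

lemma hasDerivAt_I (m x : ℝ) : HasDerivAt (Ifun m) (Gfun m x) x := by
  have hc := continuous_Gfun m
  have := intervalIntegral.integral_hasDerivAt_right (a := (0:ℝ)) (b := x)
    (hc.intervalIntegrable _ _) (hc.stronglyMeasurableAtFilter _ _) hc.continuousAt
  exact this

lemma sq_mul_G (m x : ℝ) : x ^ 2 * Gfun m x = (x ^ 2 + 1) ^ (m / 2) - 1 := by
  by_cases hx : x = 0
  · simp [Gfun, hx, Real.one_rpow]
  · rw [Gfun, if_neg hx, mul_div_cancel₀ _ (pow_ne_zero 2 hx)]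

lemma hasDerivAt_xG (m x : ℝ) :
    HasDerivAt (fun y => y * Gfun m y) (m * (x ^ 2 + 1) ^ (m / 2 - 1) - Gfun m x) x := by
  by_cases hx : x = 0
  · subst hx
    rw [hasDerivAt_iff_tendsto_slope]
    have h2 : Tendsto (Gfun m) (𝓝[≠] (0:ℝ))
        (𝓝 (m * ((0:ℝ) ^ 2 + 1) ^ (m / 2 - 1) - Gfun m 0)) := by
      have hval : m * ((0:ℝ) ^ 2 + 1) ^ (m / 2 - 1) - Gfun m 0 = m / 2 := by
        simp [Gfun, Real.one_rpow]; ring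
      rw [hval]; exact tendsto_Gfun m
    refine h2.congr' ?_
    filter_upwards [eventually_mem_nhdsWithin] with y hy
    have hy' : (y:ℝ) ≠ 0 := hy
    rw [slope_def_field]
    field_simp
    ring
  · have key : HasDerivAt (fun y : ℝ => ((y ^ 2 + 1) ^ (m / 2) - 1) / y)
        ((m / 2 * (x ^ 2 + 1) ^ (m / 2 - 1) * (2 * x) * x
          - ((x ^ 2 + 1) ^ (m / 2) - 1) * 1) / x ^ 2) x :=
      ((hasDerivAt_P (m / 2) x).sub_const 1).div (hasDerivAt_id x) hx
    have heq : (fun y => y * Gfun m y)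
        =ᶠ[𝓝 x] (fun y : ℝ => ((y ^ 2 + 1) ^ (m / 2) - 1) / y) := by
      filter_upwards [isOpen_ne.mem_nhds hx] with y hy
      rw [Gfun, if_neg hy]
      field_simp
    have := key.congr_of_eventuallyEq heq
    refine this.congr_deriv ?_
    rw [Gfun, if_neg hx]
    field_simp

lemma hgF_eq (m : ℝ) : hgF m = fun x => 1 - x * Ifun m x := by
  funext x
  unfold hgF Ifun
  congr 2
  apply intervalIntegral.integral_congr_ae
  have h0 : ∀ᵐ (y : ℝ), y ≠ 0 := by
    rw [ae_iff]
    simp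
  filter_upwards [h0] with y hy _
  rw [Gfun, if_neg hy]

/-- Explicit formula for the first derivative of `Bfun`. -/
noncomputable def B1fun (m lam b c : ℝ) (x : ℝ) : ℝ :=
  b * ((x ^ 2 + 1) ^ (-m / 2) - m * x ^ 2 * (x ^ 2 + 1) ^ (-m / 2 - 1))
  + c * (-(m * x * (x ^ 2 + 1) ^ (-m / 2 - 1)) * (1 - x * Ifun m x)
         - (x ^ 2 + 1) ^ (-m / 2) * (Ifun m x + x * Gfun m x))
  - 2 * lam * x / (m + 1)

lemma hasDerivAt_B (m lam b c y : ℝ) :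
    HasDerivAt (Bfun m lam b c) (B1fun m lam b c y) y := by
  have hI := hasDerivAt_I m y
  have hxI : HasDerivAt (fun t => t * Ifun m t) (Ifun m y + y * Gfun m y) y := by
    simpa [Pi.mul_def] using (hasDerivAt_id y).mul hI
  have hF : HasDerivAt (fun t => 1 - t * Ifun m t) (-(Ifun m y + y * Gfun m y)) y :=
    hxI.const_sub 1
  have hA := hasDerivAt_P (-m / 2) y
  have p1 := ((hasDerivAt_id y).const_mul b).mul hA
  have p2 := (hA.const_mul c).mul hF
  have p3 : HasDerivAt (fun t : ℝ => lam * (t ^ 2 + 1) / (m + 1)) (lam * (2 * y) / (m + 1)) y := by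
    have h : HasDerivAt (fun t : ℝ => t ^ 2 + 1) (2 * y) y := by
      simpa using (hasDerivAt_pow 2 y).add_const 1
    exact (h.const_mul lam).div_const (m + 1)
  have big := (p1.add p2).sub p3
  have hfun : Bfun m lam b c = fun t =>
      b * t * (t ^ 2 + 1) ^ (-m / 2) + c * (t ^ 2 + 1) ^ (-m / 2) * (1 - t * Ifun m t)
        - lam * (t ^ 2 + 1) / (m + 1) := by
    funext t
    rw [Bfun, hgF_eq]
  rw [hfun]
  refine big.congr_deriv ?_
  rw [B1fun]; simp only [id_eq]; ring

lemma hasDerivAt_B1 (m lam b c x : ℝ) :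
    HasDerivAt (B1fun m lam b c)
      (b * (-3 * m * x * (x ^ 2 + 1) ^ (-m / 2 - 1)
            + m * (m + 2) * x ^ 3 * (x ^ 2 + 1) ^ (-m / 2 - 1 - 1))
       + c * (-(m * (x ^ 2 + 1) ^ (-m / 2 - 1)
                - m * (m + 2) * x ^ 2 * (x ^ 2 + 1) ^ (-m / 2 - 1 - 1)) * (1 - x * Ifun m x)
              + 2 * m * x * (x ^ 2 + 1) ^ (-m / 2 - 1) * (Ifun m x + x * Gfun m x)
              - m * (x ^ 2 + 1) ^ (-m / 2) * (x ^ 2 + 1) ^ (m / 2 - 1))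
       - 2 * lam / (m + 1)) x := by
  have hI := hasDerivAt_I m x
  have hxI : HasDerivAt (fun t => t * Ifun m t) (Ifun m x + x * Gfun m x) x := by
    simpa [Pi.mul_def] using (hasDerivAt_id x).mul hI
  have hF : HasDerivAt (fun t => 1 - t * Ifun m t) (-(Ifun m x + x * Gfun m x)) x :=
    hxI.const_sub 1
  have hA := hasDerivAt_P (-m / 2) x
  have hA1 := hasDerivAt_P (-m / 2 - 1) x
  have q1 := ((hasDerivAt_pow 2 x).const_mul m).mul hA1
  have t1 := (hA.sub q1).const_mul b
  have q2 := (((hasDerivAt_id x).const_mul m).mul hA1).neg.mul hF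
  have q3 := hA.mul (hI.add (hasDerivAt_xG m x))
  have t2 := (q2.sub q3).const_mul c
  have t3 : HasDerivAt (fun t : ℝ => 2 * lam * t / (m + 1)) (2 * lam / (m + 1)) x := by
    simpa using ((hasDerivAt_id x).const_mul (2 * lam)).div_const (m + 1)
  have big := (t1.add t2).sub t3
  have hfun : B1fun m lam b c = fun t =>
      b * ((t ^ 2 + 1) ^ (-m / 2) - m * t ^ 2 * (t ^ 2 + 1) ^ (-m / 2 - 1))
      + c * (-(m * t * (t ^ 2 + 1) ^ (-m / 2 - 1)) * (1 - t * Ifun m t)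
             - (t ^ 2 + 1) ^ (-m / 2) * (Ifun m t + t * Gfun m t))
      - 2 * lam * t / (m + 1) := rfl
  rw [hfun]
  refine big.congr_deriv ?_
  simp only [id_eq, Nat.cast_ofNat, pow_one, Nat.reduceSub, Pi.neg_apply, Pi.mul_apply, Pi.add_apply]
  ring

/-- `B` satisfies the ODE `B'' + m/(x²+1)² (x(x²+1)B' + 2B) + 2λ = 0`. -/
theorem Bfun_ode (m lam b c : ℝ) (hm : m ≠ -1) :
    ∀ x : ℝ,
      deriv (deriv (Bfun m lam b c)) x
        + m / (x ^ 2 + 1) ^ 2 *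
            (x * (x ^ 2 + 1) * deriv (Bfun m lam b c) x + 2 * Bfun m lam b c x)
        + 2 * lam = 0 := by
  intro x
  have hm1 : m + 1 ≠ 0 := by
    intro h; exact hm (by linarith)
  have hP : (0:ℝ) < x ^ 2 + 1 := by positivity
  have hd1 : deriv (Bfun m lam b c) = B1fun m lam b c :=
    funext fun y => (hasDerivAt_B m lam b c y).deriv
  rw [hd1, (hasDerivAt_B1 m lam b c x).deriv]
  simp only [Bfun, hgF_eq, B1fun]
  have eA : (x ^ 2 + 1) ^ (-m / 2 : ℝ) = ((x ^ 2 + 1) ^ (m / 2 : ℝ))⁻¹ := by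
    rw [show (-m / 2 : ℝ) = -(m / 2) by ring, Real.rpow_neg hP.le]
  have eA1 : (x ^ 2 + 1) ^ (-m / 2 - 1 : ℝ) = ((x ^ 2 + 1) ^ (m / 2 : ℝ))⁻¹ / (x ^ 2 + 1) := by
    rw [Real.rpow_sub hP, Real.rpow_one, eA]
  have eA2 : (x ^ 2 + 1) ^ (-m / 2 - 1 - 1 : ℝ)
      = ((x ^ 2 + 1) ^ (m / 2 : ℝ))⁻¹ / (x ^ 2 + 1) / (x ^ 2 + 1) := by
    rw [Real.rpow_sub hP, Real.rpow_one, eA1]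
  have eC1 : (x ^ 2 + 1) ^ (m / 2 - 1 : ℝ) = (x ^ 2 + 1) ^ (m / 2 : ℝ) / (x ^ 2 + 1) := by
    rw [Real.rpow_sub hP, Real.rpow_one]
  have hg := sq_mul_G m x
  rw [eA, eA1, eA2, eC1]
  set C := (x ^ 2 + 1) ^ (m / 2 : ℝ) with hCdef
  have hC : C ≠ 0 := ne_of_gt (Real.rpow_pos_of_pos hP _)
  by_cases hx : x = 0
  · subst hx
    have hC1 : C = 1 := by rw [hCdef]; norm_num [Real.one_rpow]
    have hI0 : Ifun m 0 = 0 := intervalIntegral.integral_same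
    have hG0 : Gfun m 0 = m / 2 := if_pos rfl
    rw [hC1, hI0, hG0]
    field_simp
    ring
  · have hgval : Gfun m x = (C - 1) / x ^ 2 := by
      rw [← hg]; field_simp
    rw [hgval]
    field_simp
    ring
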